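/- Let N ≥ 2 be an integer, p > N, α > 0, a₁ > 0, and let f : ℝ → ℝ be continuous with 0 ≤ t·f(t) ≤ a₁|t|^p · φ_N(α|t|^{N/(N−1)}) for all t ∈ ℝ. Let f_k be the Strauss approximation of f. Then for every k ∈ ℕ and every s with |s| ≥ 1/k, one has 0 ≤ s·f_k(s) ≤ a₁·2^p·|s|^p·φ_N(2^{N/(N−1)} α |s|^{N/(N−1)}). -/

import Mathlib

/-- φ_N(t) = e^t − Σ_{j=0}^{N−2} t^j/j! -/
noncomputable def phiN (N : ℕ) (t : ℝ) : ℝ :=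
  Real.exp t - ∑ j ∈ Finset.range (N - 1), t ^ j / (Nat.factorial j : ℝ)

/-- G(s) = ∫₀^s f(ξ) dξ -/
noncomputable def Gfun (f : ℝ → ℝ) (s : ℝ) : ℝ := ∫ ξ in (0:ℝ)..s, f ξ

/-- The Strauss approximation f_k of f, defined piecewise via G = Gfun f. -/
noncomputable def strauss (f : ℝ → ℝ) (k : ℕ) (s : ℝ) : ℝ :=
  let G := Gfun f
  if s ≤ -(k:ℝ) then -(k:ℝ) * (G (-(k:ℝ) - 1/(k:ℝ)) - G (-(k:ℝ)))
  else if s ≤ -(1/(k:ℝ)) then -(k:ℝ) * (G (s - 1/(k:ℝ)) - G s)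
  else if s ≤ 0 then (k:ℝ)^2 * s * (G (-(2/(k:ℝ))) - G (-(1/(k:ℝ))))
  else if s ≤ 1/(k:ℝ) then (k:ℝ)^2 * s * (G (2/(k:ℝ)) - G (1/(k:ℝ)))
  else if s ≤ (k:ℝ) then (k:ℝ) * (G (s + 1/(k:ℝ)) - G s)
  else (k:ℝ) * (G ((k:ℝ) + 1/(k:ℝ)) - G (k:ℝ))

lemma phiN_nonneg (N : ℕ) {t : ℝ} (ht : 0 ≤ t) : 0 ≤ phiN N t := by
  have := Real.sum_le_exp_of_nonneg ht (N - 1)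
  simp only [phiN, sub_nonneg]
  exact this

lemma phiN_hasDerivAt (N : ℕ) (hN : 2 ≤ N) (t : ℝ) :
    HasDerivAt (phiN N) (phiN (N - 1) t) t := by
  have hsum : HasDerivAt
      (fun t : ℝ => ∑ j ∈ Finset.range (N - 1), t ^ j / (Nat.factorial j : ℝ))
      (∑ j ∈ Finset.range (N - 1), (j : ℝ) * t ^ (j - 1) / (Nat.factorial j : ℝ)) t := by
    apply HasDerivAt.fun_sum
    intro j _
    exact (hasDerivAt_pow j t).div_const _
  have hshift : (∑ j ∈ Finset.range (N - 1), (j : ℝ) * t ^ (j - 1) / (Nat.factorial j : ℝ))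
      = ∑ j ∈ Finset.range (N - 1 - 1), t ^ j / (Nat.factorial j : ℝ) := by
    obtain ⟨m, hm⟩ : ∃ m, N - 1 = m + 1 := ⟨N - 2, by omega⟩
    rw [hm]
    have : m + 1 - 1 = m := by omega
    rw [this, Finset.sum_range_succ']
    simp only [Nat.cast_zero, zero_mul, Nat.factorial_zero, Nat.cast_one, zero_div, add_zero]
    apply Finset.sum_congr rfl
    intro i _
    have h1 : i + 1 - 1 = i := rfl
    rw [h1, Nat.factorial_succ]
    have h2 : ((i:ℝ) + 1) ≠ 0 := by positivity
    have h3 : ((Nat.factorial i : ℝ)) ≠ 0 := by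
      exact_mod_cast Nat.factorial_ne_zero i
    push_cast
    field_simp
  have := (Real.hasDerivAt_exp t).sub hsum
  rw [hshift] at this
  exact this

lemma phiN_monotoneOn (N : ℕ) (hN : 2 ≤ N) : MonotoneOn (phiN N) (Set.Ici (0:ℝ)) := by
  apply monotoneOn_of_deriv_nonneg (convex_Ici 0)
  · exact fun x _ => (phiN_hasDerivAt N hN x).continuousAt.continuousWithinAt
  · exact fun x _ => (phiN_hasDerivAt N hN x).differentiableAt.differentiableWithinAt
  · intro x hx
    rw [interior_Ici] at hx
    rw [(phiN_hasDerivAt N hN x).deriv]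
    exact phiN_nonneg _ (le_of_lt hx)

lemma Gfun_neg (f : ℝ → ℝ) (u : ℝ) : Gfun (fun t => -f (-t)) u = Gfun f (-u) := by
  simp only [Gfun]
  rw [intervalIntegral.integral_neg, intervalIntegral.integral_comp_neg, neg_zero,
    ← intervalIntegral.integral_symm]

lemma strauss_neg_eq (f : ℝ → ℝ) (k : ℕ) (hk : 0 < k) (s : ℝ)
    (hs : s ≤ -(1/(k:ℝ))) :
    strauss f k s = - strauss (fun t => -f (-t)) k (-s) := by
  have hkpos : (0:ℝ) < k := by exact_mod_cast hk
  have hk1 : (1:ℝ) ≤ (k:ℝ) := by exact_mod_cast hk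
  have hinv : 0 < 1/(k:ℝ) := by positivity
  have hinvk : 1/(k:ℝ) ≤ (k:ℝ) := by
    rw [div_le_iff₀ hkpos]; nlinarith
  have hkne : (k:ℝ) ≠ 0 := ne_of_gt hkpos
  have hprod : (k:ℝ) * (1/(k:ℝ)) = 1 := mul_one_div_cancel hkne
  simp only [strauss, Gfun_neg]
  split_ifs
  all_goals try (exfalso; linarith)
  all_goals try (have es : s = -(k:ℝ) := by linarith)
  all_goals try (have es2 : s = -(1/(k:ℝ)) := by linarith)
  all_goals try (have ek : (k:ℝ) = 1 := by nlinarith)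
  -- goal 1: k = 1, s = -1
  · rw [es, ek]; norm_num
  -- goal 2: s = -k
  · rw [es, show -(- -(k:ℝ) + 1/(k:ℝ)) = -(k:ℝ) - 1/(k:ℝ) from by ring,
      show (- - -(k:ℝ)) = -(k:ℝ) from by ring]; ring
  -- goal 3: direct
  · rw [show -((k:ℝ) + 1/(k:ℝ)) = -(k:ℝ) - 1/(k:ℝ) from by ring]; ring
  -- goal 4: s = -1/k
  · rw [es2, show -(1/(k:ℝ)) - 1/(k:ℝ) = -(2/(k:ℝ)) from by ring]
    linear_combination ((Gfun f (-(2/(k:ℝ))) - Gfun f (-(1/(k:ℝ)))) * (k:ℝ)) * hprod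
  -- goal 5: direct
  · rw [show -(-s + 1/(k:ℝ)) = s - 1/(k:ℝ) from by ring, neg_neg]; ring

lemma stmt8_pos (N : ℕ) (hN : 2 ≤ N) (p α a₁ : ℝ) (hp : (N:ℝ) < p) (hα : 0 < α)
    (ha₁ : 0 < a₁) (f : ℝ → ℝ) (hf : Continuous f)
    (hgrowth : ∀ t : ℝ, 0 ≤ t * f t ∧
      t * f t ≤ a₁ * |t| ^ p * phiN N (α * |t| ^ ((N:ℝ)/((N:ℝ)-1))))
    (k : ℕ) (hk : 0 < k) (s : ℝ) (hs : 1/(k:ℝ) ≤ s) :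
    0 ≤ s * strauss f k s ∧
      s * strauss f k s ≤
        a₁ * 2 ^ p * |s| ^ p *
          phiN N ((2:ℝ) ^ ((N:ℝ)/((N:ℝ)-1)) * α * |s| ^ ((N:ℝ)/((N:ℝ)-1))) := by
  set c : ℝ := (N:ℝ)/((N:ℝ)-1) with hc_def
  have hN2 : (2:ℝ) ≤ (N:ℝ) := by exact_mod_cast hN
  have hc : 0 < c := by
    apply div_pos (by linarith) (by linarith)
  have hkpos : (0:ℝ) < k := by exact_mod_cast hk
  have hk1 : (1:ℝ) ≤ (k:ℝ) := by exact_mod_cast hk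
  have hinv : 0 < 1/(k:ℝ) := by positivity
  have hkne : (k:ℝ) ≠ 0 := ne_of_gt hkpos
  have hinvk : 1/(k:ℝ) ≤ (k:ℝ) := by rw [div_le_iff₀ hkpos]; nlinarith
  have hspos : 0 < s := lt_of_lt_of_le hinv hs
  have hp1 : (1:ℝ) ≤ p - 1 := by linarith
  set a : ℝ := min s (k:ℝ) with ha_def
  have hapos : 0 < a := lt_min hspos hkpos
  have hasle : a ≤ s := min_le_left _ _
  set b : ℝ := a + 1/(k:ℝ) with hb_def
  have hab : a ≤ b := by simp only [hb_def]; linarith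
  have hb2s : b ≤ 2*s := by simp only [hb_def]; have := min_le_left s (k:ℝ); linarith
  -- Step 1: strauss f k s = k * (G b - G a)
  have hval : strauss f k s = (k:ℝ) * (Gfun f b - Gfun f a) := by
    simp only [strauss]
    split_ifs with h1 h2 h3 h4 h5
    · exfalso; linarith
    · exfalso; linarith
    · exfalso; linarith
    · -- s = 1/k, a = 1/k
      have es : s = 1/(k:ℝ) := le_antisymm h4 hs
      have ea : a = 1/(k:ℝ) := by rw [ha_def, es]; exact min_eq_left hinvk
      rw [es, ea, hb_def, ea, show 1/(k:ℝ) + 1/(k:ℝ) = 2/(k:ℝ) from by ring]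
      have hprod : (k:ℝ) * (1/(k:ℝ)) = 1 := mul_one_div_cancel hkne
      linear_combination ((Gfun f (2/(k:ℝ)) - Gfun f (1/(k:ℝ))) * (k:ℝ)) * hprod
    · -- 1/k < s ≤ k : a = s
      have ea : a = s := by rw [ha_def]; exact min_eq_left h5
      rw [hb_def, ea]
    · -- k < s : a = k
      push_neg at h5
      have ea : a = (k:ℝ) := by rw [ha_def]; exact min_eq_right (le_of_lt h5)
      rw [hb_def, ea]
  have hint : Gfun f b - Gfun f a = ∫ ξ in a..b, f ξ := by
    have h := intervalIntegral.integral_add_adjacent_intervals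
      (hf.intervalIntegrable (μ := MeasureTheory.volume) 0 a) (hf.intervalIntegrable (μ := MeasureTheory.volume) a b)
    simp only [Gfun]
    linarith [h]
  -- nonneg of f on [a,b]
  have hfnn : ∀ x ∈ Set.Icc a b, 0 ≤ f x := by
    intro x hx
    have hxpos : 0 < x := lt_of_lt_of_le hapos hx.1
    exact nonneg_of_mul_nonneg_right (hgrowth x).1 hxpos
  have hInn : 0 ≤ ∫ ξ in a..b, f ξ := intervalIntegral.integral_nonneg hab hfnn
  constructor
  · rw [hval, hint]
    positivity
  · -- upper bound
    set M : ℝ := a₁ * (2*s) ^ (p-1) * phiN N (α * (2*s) ^ c) with hM_def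
    have h2spos : (0:ℝ) < 2*s := by linarith
    have hMnn : 0 ≤ M := by
      have := phiN_nonneg N (t := α * (2*s) ^ c) (by positivity)
      have h1 : (0:ℝ) ≤ a₁ * (2*s) ^ (p-1) := by positivity
      exact mul_nonneg h1 this
    have hbound : ∀ x ∈ Set.Icc a b, f x ≤ M := by
      intro x hx
      have hxpos : 0 < x := lt_of_lt_of_le hapos hx.1
      have hx2s : x ≤ 2*s := le_trans hx.2 hb2s
      have hgr := (hgrowth x).2
      rw [abs_of_pos hxpos] at hgr
      have hxp : x ^ p = x * x ^ (p-1) := by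
        have h := Real.rpow_add hxpos 1 (p-1)
        rw [show (1:ℝ) + (p-1) = p from by ring, Real.rpow_one] at h
        exact h
      have hfx : f x ≤ a₁ * x^(p-1) * phiN N (α * x^c) := by
        have h2 : x * f x ≤ x * (a₁ * x^(p-1) * phiN N (α * x^c)) := by
          calc x * f x ≤ a₁ * x^p * phiN N (α*x^c) := hgr
          _ = x * (a₁ * x^(p-1) * phiN N (α*x^c)) := by rw [hxp]; ring
        exact (mul_le_mul_iff_right₀ hxpos).mp h2
      have hx_le : x^(p-1) ≤ (2*s)^(p-1) :=
        Real.rpow_le_rpow hxpos.le hx2s (by linarith)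
      have harg : α * x^c ≤ α * (2*s)^c :=
        mul_le_mul_of_nonneg_left (Real.rpow_le_rpow hxpos.le hx2s hc.le) hα.le
      have hphi : phiN N (α*x^c) ≤ phiN N (α*(2*s)^c) :=
        phiN_monotoneOn N hN (Set.mem_Ici.mpr (by positivity)) (Set.mem_Ici.mpr (by positivity)) harg
      have hphinn : 0 ≤ phiN N (α*x^c) := phiN_nonneg N (by positivity)
      calc f x ≤ a₁ * x^(p-1) * phiN N (α * x^c) := hfx
        _ ≤ a₁ * (2*s)^(p-1) * phiN N (α*(2*s)^c) := by
            apply mul_le_mul (mul_le_mul_of_nonneg_left hx_le ha₁.le) hphi hphinn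
            positivity
        _ = M := hM_def.symm
    have hIle : (∫ ξ in a..b, f ξ) ≤ (1/(k:ℝ)) * M := by
      have h := intervalIntegral.integral_mono_on hab
        (hf.intervalIntegrable (μ := MeasureTheory.volume) a b)
        (intervalIntegrable_const) hbound
      rw [intervalIntegral.integral_const, smul_eq_mul] at h
      have hba : b - a = 1/(k:ℝ) := by rw [hb_def]; ring
      rwa [hba] at h
    rw [hval, hint, abs_of_pos hspos]
    have step1 : s * ((k:ℝ) * (∫ ξ in a..b, f ξ)) ≤ s * M := by
      have h1 : (k:ℝ) * (∫ ξ in a..b, f ξ) ≤ (k:ℝ) * ((1/(k:ℝ)) * M) :=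
        mul_le_mul_of_nonneg_left hIle hkpos.le
      have h2 : (k:ℝ) * ((1/(k:ℝ)) * M) = M := by field_simp
      rw [h2] at h1
      exact mul_le_mul_of_nonneg_left h1 hspos.le
    refine le_trans step1 ?_
    have e1 : (2*s:ℝ)^(p-1) = 2^(p-1)*s^(p-1) := Real.mul_rpow (by norm_num) hspos.le
    have e2 : (2*s:ℝ)^c = 2^c*s^c := Real.mul_rpow (by norm_num) hspos.le
    have e3 : α * ((2:ℝ)^c*s^c) = 2^c*α*s^c := by ring
    have e4 : s ^ p = s * s ^ (p-1) := by
      have h := Real.rpow_add hspos 1 (p-1)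
      rw [show (1:ℝ) + (p-1) = p from by ring, Real.rpow_one] at h
      exact h
    have hphinn2 : 0 ≤ phiN N ((2:ℝ)^c*α*s^c) := phiN_nonneg N (by positivity)
    calc s * M = a₁ * 2^(p-1) * s^p * phiN N ((2:ℝ)^c*α*s^c) := by
          rw [hM_def, e1, e2, e3, e4]; ring
      _ ≤ a₁ * 2^p * s^p * phiN N ((2:ℝ)^c*α*s^c) := by
          apply mul_le_mul_of_nonneg_right _ hphinn2
          apply mul_le_mul_of_nonneg_right _ (Real.rpow_nonneg hspos.le p)
          exact mul_le_mul_of_nonneg_left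
            (Real.rpow_le_rpow_of_exponent_le one_le_two (by linarith)) ha₁.le

/-- growth estimate for s·f_k(s) when |s| ≥ 1/k. -/
theorem stmt_8 (N : ℕ) (hN : 2 ≤ N) (p α a₁ : ℝ) (hp : (N:ℝ) < p) (hα : 0 < α)
    (ha₁ : 0 < a₁) (f : ℝ → ℝ) (hf : Continuous f)
    (hgrowth : ∀ t : ℝ, 0 ≤ t * f t ∧
      t * f t ≤ a₁ * |t| ^ p * phiN N (α * |t| ^ ((N:ℝ)/((N:ℝ)-1))))
    (k : ℕ) (hk : 0 < k) :
    ∀ s : ℝ, 1/(k:ℝ) ≤ |s| →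
      0 ≤ s * strauss f k s ∧
      s * strauss f k s ≤
        a₁ * 2 ^ p * |s| ^ p *
          phiN N ((2:ℝ) ^ ((N:ℝ)/((N:ℝ)-1)) * α * |s| ^ ((N:ℝ)/((N:ℝ)-1))) := by
  intro s hs
  rcases le_or_gt (1/(k:ℝ)) s with h | h
  · exact stmt8_pos N hN p α a₁ hp hα ha₁ f hf hgrowth k hk s h
  · have hkpos : (0:ℝ) < k := by exact_mod_cast hk
    have hinv : 0 < 1/(k:ℝ) := by positivity
    have hs' : s ≤ -(1/(k:ℝ)) := by
      rcases abs_cases s with ⟨h1, h2⟩ | ⟨h1, h2⟩ <;> linarith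
    have hcont : Continuous (fun t => -f (-t)) := (hf.comp continuous_neg).neg
    have hgrowth' : ∀ t : ℝ, 0 ≤ t * (fun t => -f (-t)) t ∧
        t * (fun t => -f (-t)) t ≤
          a₁ * |t| ^ p * phiN N (α * |t| ^ ((N:ℝ)/((N:ℝ)-1))) := by
      intro t
      obtain ⟨h1, h2⟩ := hgrowth (-t)
      rw [abs_neg] at h2
      have e : t * (-f (-t)) = (-t) * f (-t) := by ring
      constructor
      · show 0 ≤ t * (-f (-t))
        rw [e]; exact h1
      · show t * (-f (-t)) ≤ _
        rw [e]; exact h2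
    have key := stmt8_pos N hN p α a₁ hp hα ha₁ _ hcont hgrowth' k hk (-s) (by linarith)
    rw [abs_neg] at key
    have heq : s * strauss f k s = (-s) * strauss (fun t => -f (-t)) k (-s) := by
      rw [strauss_neg_eq f k hk s hs']; ring
    rw [heq]
    exact key
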